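/- Define a natural-deduction-style (or Hilbert-style) provability predicate for intuitionistic propositional logic extended with the linearity axiom scheme LIN: (φ → ψ) ∨ (ψ → φ). Then for all formulas γ₁, γ₂, δ, the generalised De Morgan formula ((γ₁ ∧ γ₂) → δ) → ((γ₁ → δ) ∨ (γ₂ → δ)) is provable in this system. -/
import Mathlib


/-- Propositional formulas over countably many atoms with `→`, `∧`, `∨`, `⊥`. -/
inductive PForm : Type
  | atom : ℕ → PForm
  | bot : PForm
  | imp : PForm → PForm → PForm
  | and : PForm → PForm → PForm
  | or : PForm → PForm → PForm

open PForm

/-- Hilbert-style provability for intuitionistic propositional logic,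
extended by an arbitrary set `Ax` of extra axioms, with modus ponens as the
only inference rule. -/
inductive HilbertProv (Ax : PForm → Prop) : PForm → Prop
  | extra {φ} : Ax φ → HilbertProv Ax φ
  | k (φ ψ) : HilbertProv Ax (imp φ (imp ψ φ))
  | s (φ ψ χ) : HilbertProv Ax
      (imp (imp φ (imp ψ χ)) (imp (imp φ ψ) (imp φ χ)))
  | andIntro (φ ψ) : HilbertProv Ax (imp φ (imp ψ (and φ ψ)))
  | andElimL (φ ψ) : HilbertProv Ax (imp (and φ ψ) φ)
  | andElimR (φ ψ) : HilbertProv Ax (imp (and φ ψ) ψ)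
  | orIntroL (φ ψ) : HilbertProv Ax (imp φ (or φ ψ))
  | orIntroR (φ ψ) : HilbertProv Ax (imp ψ (or φ ψ))
  | orElim (φ ψ χ) : HilbertProv Ax
      (imp (imp φ χ) (imp (imp ψ χ) (imp (or φ ψ) χ)))
  | exFalso (φ) : HilbertProv Ax (imp bot φ)
  | mp {φ ψ} : HilbertProv Ax (imp φ ψ) → HilbertProv Ax φ → HilbertProv Ax ψ

/-- The linearity axiom scheme LIN: all formulas of the form
`(φ → ψ) ∨ (ψ → φ)`. -/
def LINScheme : PForm → Prop :=
  fun f => ∃ φ ψ : PForm, f = or (imp φ ψ) (imp ψ φ)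

/-- In intuitionistic propositional logic extended with the linearity axiom
scheme LIN, every instance of the generalised De Morgan scheme
`((γ₁ ∧ γ₂) → δ) → ((γ₁ → δ) ∨ (γ₂ → δ))` is provable. -/
theorem HilbertProv.mono {Ax Ax' : PForm → Prop} {φ : PForm}
    (h : HilbertProv Ax φ) (hsub : ∀ f, Ax f → Ax' f) : HilbertProv Ax' φ := by
  induction h with
  | extra h => exact .extra (hsub _ h)
  | k φ ψ => exact .k φ ψ
  | s φ ψ χ => exact .s φ ψ χ
  | andIntro φ ψ => exact .andIntro φ ψ
  | andElimL φ ψ => exact .andElimL φ ψ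
  | andElimR φ ψ => exact .andElimR φ ψ
  | orIntroL φ ψ => exact .orIntroL φ ψ
  | orIntroR φ ψ => exact .orIntroR φ ψ
  | orElim φ ψ χ => exact .orElim φ ψ χ
  | exFalso φ => exact .exFalso φ
  | mp _ _ ih1 ih2 => exact .mp ih1 ih2

theorem HilbertProv.imp_id (Ax : PForm → Prop) (φ : PForm) :
    HilbertProv Ax (imp φ φ) :=
  .mp (.mp (.s φ (imp φ φ) φ) (.k φ (imp φ φ))) (.k φ φ)

/-- Composition: from `⊢ a → b` and `⊢ b → c` obtain `⊢ a → c`. -/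
theorem HilbertProv.comp {Ax : PForm → Prop} {a b c : PForm}
    (hab : HilbertProv Ax (imp a b)) (hbc : HilbertProv Ax (imp b c)) :
    HilbertProv Ax (imp a c) :=
  .mp (.mp (.s a b c) (.mp (.k (imp b c) a) hbc)) hab

/-- Deduction theorem for the Hilbert system. -/
theorem HilbertProv.deduction {Ax : PForm → Prop} {Γ : List PForm} {ψ φ : PForm}
    (h : HilbertProv (fun f => Ax f ∨ f ∈ (ψ :: Γ)) φ) :
    HilbertProv (fun f => Ax f ∨ f ∈ Γ) (imp ψ φ) := by
  induction h with
  | @extra χ h =>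
    rcases h with h | h
    · exact .mp (.k χ ψ) (.extra (Or.inl h))
    · rcases List.mem_cons.mp h with rfl | h
      · exact imp_id _ _
      · exact .mp (.k χ ψ) (.extra (Or.inr h))
  | k a b => exact .mp (.k _ ψ) (.k a b)
  | s a b c => exact .mp (.k _ ψ) (.s a b c)
  | andIntro a b => exact .mp (.k _ ψ) (.andIntro a b)
  | andElimL a b => exact .mp (.k _ ψ) (.andElimL a b)
  | andElimR a b => exact .mp (.k _ ψ) (.andElimR a b)
  | orIntroL a b => exact .mp (.k _ ψ) (.orIntroL a b)
  | orIntroR a b => exact .mp (.k _ ψ) (.orIntroR a b)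
  | orElim a b c => exact .mp (.k _ ψ) (.orElim a b c)
  | exFalso a => exact .mp (.k _ ψ) (.exFalso a)
  | mp _ _ ih1 ih2 => exact .mp (.mp (.s _ _ _) ih1) ih2

theorem lin_proves_gdm (γ₁ γ₂ δ : PForm) :
    HilbertProv LINScheme
      (PForm.imp (PForm.imp (PForm.and γ₁ γ₂) δ)
        (PForm.or (PForm.imp γ₁ δ) (PForm.imp γ₂ δ))) := by
  set A := PForm.imp (PForm.and γ₁ γ₂) δ with hA
  set D := PForm.or (PForm.imp γ₁ δ) (PForm.imp γ₂ δ) with hD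
  -- branch 1: assuming γ₁ → γ₂ and A, derive D
  have h1 : HilbertProv LINScheme (imp (imp γ₁ γ₂) (imp A D)) := by
    have base : HilbertProv
        (fun f => LINScheme f ∨ f ∈ [A, imp γ₁ γ₂]) D := by
      have hl : HilbertProv (fun f => LINScheme f ∨ f ∈ [A, imp γ₁ γ₂])
          (imp γ₁ γ₂) := .extra (Or.inr (by simp))
      have hAh : HilbertProv (fun f => LINScheme f ∨ f ∈ [A, imp γ₁ γ₂]) A :=
        .extra (Or.inr (by simp))
      have hpair : HilbertProv (fun f => LINScheme f ∨ f ∈ [A, imp γ₁ γ₂])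
          (imp γ₁ (PForm.and γ₁ γ₂)) :=
        .mp (.mp (.s γ₁ γ₂ (PForm.and γ₁ γ₂)) (.andIntro γ₁ γ₂)) hl
      exact .mp (.orIntroL _ _) (hpair.comp hAh)
    have := (HilbertProv.deduction (HilbertProv.deduction base))
    exact this.mono (fun f hf => by rcases hf with h | h; exact h; simp at h)
  -- branch 2: assuming γ₂ → γ₁ and A, derive D
  have h2 : HilbertProv LINScheme (imp (imp γ₂ γ₁) (imp A D)) := by
    have base : HilbertProv
        (fun f => LINScheme f ∨ f ∈ [A, imp γ₂ γ₁]) D := by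
      have hl : HilbertProv (fun f => LINScheme f ∨ f ∈ [A, imp γ₂ γ₁])
          (imp γ₂ γ₁) := .extra (Or.inr (by simp))
      have hAh : HilbertProv (fun f => LINScheme f ∨ f ∈ [A, imp γ₂ γ₁]) A :=
        .extra (Or.inr (by simp))
      have hpair : HilbertProv (fun f => LINScheme f ∨ f ∈ [A, imp γ₂ γ₁])
          (imp γ₂ (PForm.and γ₁ γ₂)) := by
        have : HilbertProv (fun f => LINScheme f ∨ f ∈ [A, imp γ₂ γ₁])
            (imp γ₂ (imp γ₂ (PForm.and γ₁ γ₂))) := hl.comp (.andIntro γ₁ γ₂)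
        exact .mp (.mp (.s γ₂ γ₂ (PForm.and γ₁ γ₂)) this) (.imp_id _ _)
      exact .mp (.orIntroR _ _) (hpair.comp hAh)
    have := (HilbertProv.deduction (HilbertProv.deduction base))
    exact this.mono (fun f hf => by rcases hf with h | h; exact h; simp at h)
  have hlin : HilbertProv LINScheme
      (PForm.or (imp γ₁ γ₂) (imp γ₂ γ₁)) := .extra ⟨γ₁, γ₂, rfl⟩
  exact .mp (.mp (.mp (.orElim _ _ _) h1) h2) hlin
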